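/- Let P = DΠ be a generalized permutation matrix, i.e., D diagonal with strictly positive diagonal entries and Π a permutation matrix, so that P is invertible. Then P⁻¹ · ReLU(P x) = ReLU(x) for all vectors x. -/
import Mathlib


open Matrix

def permMat {n : Type*} [DecidableEq n] (σ : Equiv.Perm n) : Matrix n n ℝ :=
  Matrix.of fun i j => if i = σ j then (1 : ℝ) else 0

def relu {n : Type*} (x : n → ℝ) : n → ℝ := fun i => max 0 (x i)

lemma permMat_eq {n : Type*} [Fintype n] [DecidableEq n] (σ : Equiv.Perm n) :
    permMat σ = (Equiv.Perm.permMatrix ℝ σ)ᵀ := by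
  ext i j
  simp [permMat, Equiv.Perm.permMatrix, PEquiv.toMatrix, Equiv.toPEquiv, eq_comm]

lemma permMat_mulVec {n : Type*} [Fintype n] [DecidableEq n] (σ : Equiv.Perm n) (x : n → ℝ) :
    (permMat σ).mulVec x = fun i => x (σ⁻¹ i) := by
  ext i
  simp only [mulVec, dotProduct, permMat, Matrix.of_apply, ite_mul, one_mul, zero_mul]
  rw [Finset.sum_eq_single (σ⁻¹ i)]
  · simp
  · intro b _ hb
    rw [if_neg]
    intro h
    exact hb (by simp [h])
  · simp

/-- For a generalized permutation matrix `P = D Π` with strictly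
positive diagonal `D`, `P⁻¹ · ReLU(P x) = ReLU(x)`. -/
theorem inv_relu_genPerm {n : Type*} [Fintype n] [DecidableEq n]
    (d : n → ℝ) (hd : ∀ i, 0 < d i) (σ : Equiv.Perm n) (x : n → ℝ) :
    (Matrix.diagonal d * permMat σ)⁻¹.mulVec
        (relu ((Matrix.diagonal d * permMat σ).mulVec x)) = relu x := by
  set P := Matrix.diagonal d * permMat σ with hP
  have hrelu : relu (P.mulVec x) = P.mulVec (relu x) := by
    ext i
    simp only [hP, ← mulVec_mulVec, permMat_mulVec, mulVec_diagonal, relu]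
    rw [mul_max_of_nonneg _ _ (hd i).le, mul_zero, max_comm]
  have hdet : IsUnit P.det := by
    rw [hP, det_mul, permMat_eq, det_transpose, det_permutation, det_diagonal]
    apply IsUnit.mul
    · exact (Finset.prod_pos fun i _ => hd i).ne'.isUnit
    · rcases Int.units_eq_one_or (Equiv.Perm.sign σ) with h | h <;> simp [h]
  rw [hrelu, mulVec_mulVec, nonsing_inv_mul P hdet, one_mulVec]
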